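/- Let (α, N, B, κ_g, τ_g) be a Frenet apparatus of a timelike unit speed non-geodesic curve in S³₁, and suppose there exist constants μ₁, μ₂ ∈ ℝ with μ₂² − μ₁² < 1 such that τ_g(s) = (μ₁·sinh(s) + μ₂·cosh(s))·κ_g(s) for all s ∈ ℝ. Then there exists a point p ∈ S³₁ (i.e., ⟨p,p⟩ = 1) such that ⟨p, N(s)⟩ = 0 for all s; that is, α is a timelike rectifying curve with respect to p. -/

import Mathlib

open Real

/-- The Minkowski scalar product on `ℝ⁴₁`:
`⟨x,y⟩ = -x₁y₁ + x₂y₂ + x₃y₃ + x₄y₄`. -/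
noncomputable def mdot (x y : Fin 4 → ℝ) : ℝ :=
  -(x 0 * y 0) + x 1 * y 1 + x 2 * y 2 + x 3 * y 3

lemma mdot_expandL (x y z w : Fin 4 → ℝ) (c d : ℝ) :
    mdot (c • x + d • y + z) w = c * mdot x w + d * mdot y w + mdot z w := by
  simp [mdot]; ring

lemma mdot_comb (x y z : Fin 4 → ℝ) (c d : ℝ) :
    mdot (c • x + d • y + z) (c • x + d • y + z) =
      c ^ 2 * mdot x x + d ^ 2 * mdot y y + mdot z z
        + 2 * c * d * mdot x y + 2 * c * mdot x z + 2 * d * mdot y z := by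
  simp [mdot]; ring

lemma mdot_smul_smul (c : ℝ) (x y : Fin 4 → ℝ) :
    mdot (c • x) (c • y) = c ^ 2 * mdot x y := by
  simp [mdot]; ring

lemma mdot_symm (x y : Fin 4 → ℝ) : mdot x y = mdot y x := by
  simp [mdot]; ring

/-- A timelike unit speed non-geodesic curve in `S³₁` whose curvature ratio satisfies
`τ_g = (μ₁ sinh s + μ₂ cosh s) κ_g` with `μ₂² - μ₁² < 1` is a timelike rectifying curve
with respect to some point `p ∈ S³₁`. -/
theorem timelike_rectifying_of_ratio
    (α N B : ℝ → Fin 4 → ℝ) (κg τg : ℝ → ℝ)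
    (hαsm : ContDiff ℝ (⊤ : ℕ∞) α) (hNsm : ContDiff ℝ (⊤ : ℕ∞) N)
    (hBsm : ContDiff ℝ (⊤ : ℕ∞) B)
    (hκsm : ContDiff ℝ (⊤ : ℕ∞) κg) (hτsm : ContDiff ℝ (⊤ : ℕ∞) τg)
    (hκpos : ∀ s, 0 < κg s)
    (hα1 : ∀ s, mdot (α s) (α s) = 1)
    (hT1 : ∀ s, mdot (deriv α s) (deriv α s) = -1)
    (hN1 : ∀ s, mdot (N s) (N s) = 1)
    (hB1 : ∀ s, mdot (B s) (B s) = 1)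
    (hαT : ∀ s, mdot (α s) (deriv α s) = 0)
    (hαN : ∀ s, mdot (α s) (N s) = 0)
    (hαB : ∀ s, mdot (α s) (B s) = 0)
    (hTN : ∀ s, mdot (deriv α s) (N s) = 0)
    (hTB : ∀ s, mdot (deriv α s) (B s) = 0)
    (hNB : ∀ s, mdot (N s) (B s) = 0)
    (hF1 : ∀ s, deriv (deriv α) s = α s + κg s • N s)
    (hF2 : ∀ s, deriv N s = κg s • deriv α s + τg s • B s)
    (hF3 : ∀ s, deriv B s = -τg s • N s)
    (μ₁ μ₂ : ℝ) (hμ : μ₂ ^ 2 - μ₁ ^ 2 < 1)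
    (hratio : ∀ s, τg s = (μ₁ * Real.sinh s + μ₂ * Real.cosh s) * κg s) :
    ∃ p : Fin 4 → ℝ, mdot p p = 1 ∧ ∀ s, mdot p (N s) = 0 := by
  have hα'sm : ContDiff ℝ (⊤ : ℕ∞) (deriv α) := (contDiff_infty_iff_deriv.mp hαsm).2
  set P : ℝ → Fin 4 → ℝ := fun s =>
    (-(μ₁ * Real.cosh s + μ₂ * Real.sinh s)) • α s
      + (μ₁ * Real.sinh s + μ₂ * Real.cosh s) • deriv α s + B s with hPdef
  have hPd : ∀ s, HasDerivAt P 0 s := by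
    intro s
    have ha : HasDerivAt (fun s => -(μ₁ * Real.cosh s + μ₂ * Real.sinh s))
        (-(μ₁ * Real.sinh s + μ₂ * Real.cosh s)) s := by
      exact (((Real.hasDerivAt_cosh s).const_mul μ₁).add
        ((Real.hasDerivAt_sinh s).const_mul μ₂)).neg
    have hb : HasDerivAt (fun s => μ₁ * Real.sinh s + μ₂ * Real.cosh s)
        (-(-(μ₁ * Real.cosh s + μ₂ * Real.sinh s))) s := by
      have := ((Real.hasDerivAt_sinh s).const_mul μ₁).add
        ((Real.hasDerivAt_cosh s).const_mul μ₂)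
      exact this.congr_deriv (by ring)
    have h1 : HasDerivAt α (deriv α s) s := (hαsm.differentiable (by simp) s).hasDerivAt
    have h2 : HasDerivAt (deriv α) (α s + κg s • N s) s := by
      have := (hα'sm.differentiable (by simp) s).hasDerivAt
      rwa [hF1] at this
    have h3 : HasDerivAt B (-τg s • N s) s := by
      have := (hBsm.differentiable (by simp) s).hasDerivAt
      rwa [hF3] at this
    have h := ((ha.smul h1).add (hb.smul h2)).add h3
    refine h.congr_deriv ?_
    rw [hratio s]
    simp only [smul_add, smul_smul, neg_smul]
    module
  have hPdiff : Differentiable ℝ P := fun s => (hPd s).differentiableAt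
  have hPconst : ∀ s, P s = P 0 :=
    fun s => is_const_of_deriv_eq_zero hPdiff (fun x => (hPd x).deriv) s 0
  have hP0 : P 0 = (-μ₁) • α 0 + μ₂ • deriv α 0 + B 0 := by
    rw [hPdef]; norm_num
  have hc : (0:ℝ) < 1 + μ₁ ^ 2 - μ₂ ^ 2 := by nlinarith
  refine ⟨(Real.sqrt (1 + μ₁ ^ 2 - μ₂ ^ 2))⁻¹ • P 0, ?_, ?_⟩
  · rw [mdot_smul_smul, hP0, mdot_comb, hα1 0, hT1 0, hB1 0, hαT 0, hαB 0, hTB 0]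
    rw [inv_pow, Real.sq_sqrt hc.le, inv_mul_eq_one₀ hc.ne']
    ring
  · intro s
    have : mdot (P s) (N s) = 0 := by
      rw [hPdef]
      show mdot (_ • α s + _ • deriv α s + B s) (N s) = 0
      rw [mdot_expandL, hαN s, hTN s, mdot_symm (B s) (N s), hNB s]; ring
    have h0 : mdot (P 0) (N s) = 0 := by rw [← hPconst s]; exact this
    have : mdot ((Real.sqrt (1 + μ₁ ^ 2 - μ₂ ^ 2))⁻¹ • P 0) (N s)
        = (Real.sqrt (1 + μ₁ ^ 2 - μ₂ ^ 2))⁻¹ * mdot (P 0) (N s) := by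
      simp only [mdot, Pi.smul_apply, smul_eq_mul]; ring
    rw [this, h0, mul_zero]
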